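/- Let μ be a Borel probability measure on a cube in ℝ^{2k} such that for some constants C > 0 and κ > 0, every axis-parallel cube R of side length ε satisfies μ(R) ≤ C·ε^{1/κ}, and suppose μ(D₁) = δ > 0 for a fixed sub-cube D₁. Then for every integer m ≥ 1 there exist constants c, c' > 0 (depending on C, κ, δ, k, m) such that for every integer D ≥ 2 there are D axis-parallel cubes R₁, …, R_D, each of side length c'·D^{-2κ}, with μ(R_i) ≥ c·D^{-4kκ} for all i, and such that the dilated cubes mR₁, …, mR_D (same centers, m times the side length) are pairwise disjoint. -/

import Mathlib

open MeasureTheory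
set_option maxHeartbeats 1000000

/-- The axis-parallel cube in `ℝ^m` with center `x` and side length `ℓ`. -/
def cube {m : ℕ} (x : Fin m → ℝ) (ℓ : ℝ) : Set (Fin m → ℝ) :=
  {y | ∀ i, |y i - x i| ≤ ℓ / 2}

lemma dilate_disj {n : ℕ} (z w : Fin n → ℝ) (s : ℝ) (m : ℕ)
    (y : Fin n → ℝ) (hy : y ∈ cube z s) (hy' : y ∉ cube w ((2 * m + 1) * s)) :
    Disjoint (cube z ((m : ℝ) * s)) (cube w ((m : ℝ) * s)) := by
  rw [Set.disjoint_left]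
  intro u hu hv
  apply hy'
  intro t
  have h1 := hy t
  have h2 := hu t
  have h3 := hv t
  have e1 : |y t - w t| ≤ |y t - z t| + |u t - z t| + |u t - w t| := by
    linarith [abs_sub_le (y t) (u t) (w t), abs_sub_le (y t) (z t) (u t),
      (abs_sub_comm (z t) (u t)).le, (abs_sub_comm (z t) (u t)).ge]
  calc |y t - w t| ≤ s / 2 + (m : ℝ) * s / 2 + (m : ℝ) * s / 2 := by linarith
    _ = (2 * (m : ℝ) + 1) * s / 2 := by ring

lemma grid_coord (s ℓ u : ℝ) (hs : 0 < s) (hu : 0 ≤ u) (hu' : u ≤ ℓ)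
    (M : ℕ) (hM : 1 ≤ M) (hMs : ℓ ≤ M * s) :
    ∃ j : Fin M, |u - (s / 2 + s * j)| ≤ s / 2 := by
  have hf0 : (0 : ℤ) ≤ ⌊u / s⌋ := Int.floor_nonneg.mpr (by positivity)
  set f : ℕ := (⌊u / s⌋).toNat with hf
  have hfval : (f : ℝ) = (⌊u / s⌋ : ℝ) := by
    rw [hf]; exact_mod_cast congrArg Int.cast (Int.toNat_of_nonneg hf0)
  set j0 : ℕ := min (M - 1) f with hj0
  have hj0lt : j0 < M := by omega
  refine ⟨⟨j0, hj0lt⟩, ?_⟩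
  have hlow : s * j0 ≤ u := by
    have h1 : (j0 : ℝ) ≤ f := by exact_mod_cast Nat.cast_le.mpr (min_le_right _ _)
    have h2 : (f : ℝ) ≤ u / s := hfval ▸ Int.floor_le (u / s)
    have h3 : (j0 : ℝ) ≤ u / s := le_trans h1 h2
    calc s * j0 ≤ s * (u / s) := by nlinarith
      _ = u := by field_simp
  have hhigh : u ≤ s * (j0 + 1) := by
    by_cases hc : f ≤ M - 1
    · have hje : j0 = f := by omega
      have h2 : u / s < (f : ℝ) + 1 := by
        rw [hfval]; exact Int.lt_floor_add_one (u / s)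
      have h4 : u < s * ((f : ℝ) + 1) := by
        have := (div_lt_iff₀ hs).mp h2; linarith
      rw [hje]; linarith
    · have hje : j0 = M - 1 := by omega
      have h5 : (j0 : ℝ) + 1 = (M : ℝ) := by
        rw [hje]; push_cast [Nat.cast_sub hM]; ring
      rw [h5]; linarith [hMs]
  rw [abs_le]
  constructor <;> [skip; skip] <;> simp only [] <;> push_cast <;> [linarith; linarith]

/-- Let `μ` be a Borel probability measure on a cube in `ℝ^{2k}` such that
every axis-parallel cube of side `ε` has `μ`-measure at most `C·ε^{1/κ}`, and suppose
`μ(D₁) = δ > 0` for a fixed sub-cube `D₁`.  Then for every `m ≥ 1` there are constants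
`c, c' > 0` such that for every integer `D ≥ 2` there are `D` axis-parallel cubes
`R₁, …, R_D`, each of side `c'·D^{-2κ}`, with `μ(R_i) ≥ c·D^{-4kκ}`, whose `m`-fold dilates
(same centers, `m` times the side length) are pairwise disjoint. -/
theorem cube_selection (k : ℕ) (hk : 1 ≤ k)
    (μ : Measure (Fin (2 * k) → ℝ)) [IsProbabilityMeasure μ]
    (C κ δ : ℝ) (hC : 0 < C) (hκ : 0 < κ) (hδ : 0 < δ)
    (x₁ : Fin (2 * k) → ℝ) (ℓ₁ : ℝ) (hℓ₁ : 0 < ℓ₁)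
    (hμD₁ : μ (cube x₁ ℓ₁) = ENNReal.ofReal δ)
    (hHolder : ∀ (x : Fin (2 * k) → ℝ) (ε : ℝ), 0 < ε →
      μ (cube x ε) ≤ ENNReal.ofReal (C * ε ^ (1 / κ)))
    (m : ℕ) (hm : 1 ≤ m) :
    ∃ c c' : ℝ, 0 < c ∧ 0 < c' ∧
      ∀ D : ℕ, 2 ≤ D →
        ∃ ctr : Fin D → (Fin (2 * k) → ℝ),
          (∀ i, ENNReal.ofReal (c * (D : ℝ) ^ (-(4 * k * κ))) ≤
              μ (cube (ctr i) (c' * (D : ℝ) ^ (-(2 * κ))))) ∧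
          Pairwise (Function.onFun Disjoint
            (fun i => cube (ctr i) ((m : ℝ) * (c' * (D : ℝ) ^ (-(2 * κ)))))) := by
  classical
  set c' : ℝ := min ℓ₁ ((δ / (2 * C)) ^ κ / (2 * m + 1)) with hc'def
  have hc' : 0 < c' := by
    apply lt_min hℓ₁
    have : (0:ℝ) < (δ / (2 * C)) ^ κ := Real.rpow_pos_of_pos (by positivity) κ
    positivity
  have hc'ℓ : c' ≤ ℓ₁ := min_le_left _ _
  set c : ℝ := (δ / 2) * (c' / (2 * ℓ₁)) ^ (2 * k) with hcdef
  have hc : 0 < c := by positivity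
  refine ⟨c, c', hc, hc', ?_⟩
  intro D hD
  have hD0 : (0:ℝ) < D := by positivity
  have hD1 : (1:ℝ) ≤ D := by exact_mod_cast Nat.one_le_of_lt hD
  set s : ℝ := c' * (D : ℝ) ^ (-(2 * κ)) with hsdef
  have hrp : (0:ℝ) < (D : ℝ) ^ (-(2 * κ)) := Real.rpow_pos_of_pos hD0 _
  have hrl1 : (D : ℝ) ^ (-(2 * κ)) ≤ 1 :=
    Real.rpow_le_one_of_one_le_of_nonpos hD1 (by nlinarith)
  have hspos : 0 < s := by positivity
  have hsle : s ≤ ℓ₁ := by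
    calc s ≤ c' * 1 := by nlinarith
      _ ≤ ℓ₁ := by linarith
  -- bound for the Hölder estimate
  have hDb : (D : ℝ) * (C * ((2 * m + 1) * s) ^ (1 / κ)) ≤ δ / 2 := by
    have hmc : (0:ℝ) < 2 * m + 1 := by positivity
    have e1 : ((2 * (m:ℝ) + 1) * s) ^ (1 / κ)
        = ((2 * (m:ℝ) + 1) * c') ^ (1 / κ) * ((D:ℝ) ^ (-(2 * κ))) ^ (1 / κ) := by
      rw [hsdef, ← mul_assoc, Real.mul_rpow (by positivity) hrp.le]
    have e2 : ((D:ℝ) ^ (-(2 * κ))) ^ (1 / κ) = (D:ℝ) ^ ((-2 : ℝ)) := by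
      rw [← Real.rpow_mul hD0.le]
      congr 1
      field_simp
    have hA : ((2 * (m:ℝ) + 1) * c') ^ (1 / κ) ≤ δ / (2 * C) := by
      have h1 : (2 * (m:ℝ) + 1) * c' ≤ (δ / (2 * C)) ^ κ := by
        have := min_le_right ℓ₁ ((δ / (2 * C)) ^ κ / (2 * m + 1))
        rw [hc'def]
        calc (2 * (m:ℝ) + 1) * min ℓ₁ ((δ / (2 * C)) ^ κ / (2 * m + 1))
            ≤ (2 * (m:ℝ) + 1) * ((δ / (2 * C)) ^ κ / (2 * m + 1)) := by nlinarith
          _ = (δ / (2 * C)) ^ κ := by field_simp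
      calc ((2 * (m:ℝ) + 1) * c') ^ (1 / κ)
          ≤ ((δ / (2 * C)) ^ κ) ^ (1 / κ) :=
            Real.rpow_le_rpow (by positivity) h1 (by positivity)
        _ = δ / (2 * C) := by
            rw [← Real.rpow_mul (by positivity)]
            rw [mul_one_div, div_self hκ.ne', Real.rpow_one]
      
    have hDD : (D:ℝ) * (D:ℝ) ^ ((-2 : ℝ)) ≤ 1 := by
      have e3 : (D:ℝ) ^ ((-2 : ℝ)) = ((D:ℝ) ^ (2:ℕ))⁻¹ := by
        rw [show ((-2):ℝ) = -((2:ℕ):ℝ) by norm_num, Real.rpow_neg hD0.le,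
          Real.rpow_natCast]
      rw [e3, pow_two]
      rw [show (D:ℝ) * ((D:ℝ) * (D:ℝ))⁻¹ = (D:ℝ)⁻¹ by field_simp]
      exact inv_le_one_of_one_le₀ hD1
    have hApos : (0:ℝ) ≤ ((2 * (m:ℝ) + 1) * c') ^ (1 / κ) := by positivity
    have hDp : (0:ℝ) < (D:ℝ) ^ ((-2 : ℝ)) := Real.rpow_pos_of_pos hD0 _
    calc (D : ℝ) * (C * ((2 * (m:ℝ) + 1) * s) ^ (1 / κ))
        = (C * (((2 * (m:ℝ) + 1) * c') ^ (1 / κ))) * ((D:ℝ) * (D:ℝ) ^ ((-2 : ℝ))) := by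
            rw [e1, e2]; ring
      _ ≤ (C * (δ / (2 * C))) * 1 := by
            apply mul_le_mul
            · nlinarith
            · exact hDD
            · positivity
            · positivity
      _ = δ / 2 := by field_simp
  -- grid
  set M : ℕ := ⌈ℓ₁ / s⌉₊ with hMdef
  have hM1 : 1 ≤ M := Nat.one_le_iff_ne_zero.mpr (by
    have : 0 < M := Nat.ceil_pos.mpr (by positivity)
    omega)
  have hMs : ℓ₁ ≤ M * s := by
    have := Nat.le_ceil (ℓ₁ / s)
    calc ℓ₁ = (ℓ₁ / s) * s := by field_simp
      _ ≤ (M : ℝ) * s := by nlinarith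
  have hMle : (M : ℝ) ≤ 2 * ℓ₁ / s := by
    have h1 : (M : ℝ) < ℓ₁ / s + 1 := Nat.ceil_lt_add_one (by positivity)
    have h2 : (1:ℝ) ≤ ℓ₁ / s := (one_le_div hspos).mpr hsle
    calc (M:ℝ) ≤ ℓ₁ / s + 1 := h1.le
      _ ≤ 2 * (ℓ₁ / s) := by linarith
      _ = 2 * ℓ₁ / s := by ring
  haveI : Nonempty (Fin M) := ⟨⟨0, hM1⟩⟩
  set p : (Fin (2 * k) → Fin M) → Fin (2 * k) → ℝ :=
    fun g t => x₁ t - ℓ₁ / 2 + (s / 2 + s * (g t)) with hpdef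
  have hcard : (Fintype.card (Fin (2 * k) → Fin M) : ℝ) = (M : ℝ) ^ (2 * k) := by
    simp [Fintype.card_fun]
  -- cover lemma
  have cov : ∀ y ∈ cube x₁ ℓ₁, ∃ g : Fin (2 * k) → Fin M, y ∈ cube (p g) s := by
    intro y hy
    have h : ∀ t, ∃ j : Fin M, |(y t - (x₁ t - ℓ₁ / 2)) - (s / 2 + s * j)| ≤ s / 2 := by
      intro t
      have ht := hy t
      rw [abs_le] at ht
      exact grid_coord s ℓ₁ _ hspos (by linarith [ht.1]) (by linarith [ht.2]) M hM1 hMs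
    choose g hg using h
    refine ⟨g, fun t => ?_⟩
    have e : y t - p g t = (y t - (x₁ t - ℓ₁ / 2)) - (s / 2 + s * (g t)) := by
      rw [hpdef]; ring
    rw [e]
    exact hg t
  -- the target measure bound per grid cube
  have htarget : c * (D : ℝ) ^ (-(4 * k * κ)) * (M : ℝ) ^ (2 * k) ≤ δ / 2 := by
    have spow : (c' / (2 * ℓ₁)) ^ (2 * k) * (D : ℝ) ^ (-(4 * (k:ℝ) * κ))
        = (s / (2 * ℓ₁)) ^ (2 * k) := by
      have e4 : (D : ℝ) ^ (-(4 * (k:ℝ) * κ)) = ((D : ℝ) ^ (-(2 * κ))) ^ (2 * k) := by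
        rw [← Real.rpow_natCast ((D : ℝ) ^ (-(2 * κ))) (2 * k), ← Real.rpow_mul hD0.le]
        congr 1
        push_cast
        ring
      rw [e4, ← mul_pow]
      congr 1
      rw [hsdef]
      ring
    have e5 : c * (D : ℝ) ^ (-(4 * (k:ℝ) * κ)) = (δ / 2) * (s / (2 * ℓ₁)) ^ (2 * k) := by
      rw [hcdef, mul_assoc, spow]
    rw [e5]
    have h6 : (M : ℝ) ^ (2 * k) ≤ (2 * ℓ₁ / s) ^ (2 * k) :=
      pow_le_pow_left₀ (by positivity) hMle _
    calc (δ / 2) * (s / (2 * ℓ₁)) ^ (2 * k) * (M : ℝ) ^ (2 * k)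
        ≤ (δ / 2) * (s / (2 * ℓ₁)) ^ (2 * k) * (2 * ℓ₁ / s) ^ (2 * k) :=
          mul_le_mul_of_nonneg_left h6 (by positivity)
      _ = (δ / 2) * ((s / (2 * ℓ₁)) * (2 * ℓ₁ / s)) ^ (2 * k) := by rw [mul_pow, mul_assoc]
      _ = δ / 2 := by
          rw [show (s / (2 * ℓ₁)) * (2 * ℓ₁ / s) = 1 by field_simp]
          simp
  -- main induction
  have key : ∀ n : ℕ, n ≤ D → ∃ ctr : Fin n → (Fin (2 * k) → ℝ),
      (∀ i, ENNReal.ofReal (c * (D : ℝ) ^ (-(4 * k * κ))) ≤ μ (cube (ctr i) s)) ∧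
      Pairwise (Function.onFun Disjoint
        (fun i => cube (ctr i) ((m : ℝ) * s))) := by
    intro n
    induction n with
    | zero =>
      intro _
      exact ⟨Fin.elim0, fun i => i.elim0, fun i => i.elim0⟩
    | succ n ih =>
      intro hn
      obtain ⟨ctr, hmeas, hdisj⟩ := ih (Nat.le_of_succ_le hn)
      set G : Set (Fin (2 * k) → ℝ) :=
        cube x₁ ℓ₁ \ ⋃ i : Fin n, cube (ctr i) ((2 * m + 1) * s) with hGdef
      have hside : (0:ℝ) < (2 * (m:ℝ) + 1) * s := by positivity
      -- μ G ≥ δ/2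
      have hGmeas : ENNReal.ofReal (δ / 2) ≤ μ G := by
        have hsub : cube x₁ ℓ₁ ⊆ G ∪ ⋃ i : Fin n, cube (ctr i) ((2 * m + 1) * s) := by
          rw [hGdef, Set.diff_union_self]
          exact Set.subset_union_left
        have h1 : μ (cube x₁ ℓ₁) ≤ μ G + μ (⋃ i : Fin n, cube (ctr i) ((2 * m + 1) * s)) :=
          le_trans (measure_mono hsub) (measure_union_le _ _)
        have h2 : μ (⋃ i : Fin n, cube (ctr i) ((2 * m + 1) * s)) ≤ ENNReal.ofReal (δ / 2) := by
          refine le_trans (measure_iUnion_fintype_le μ _) ?_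
          have hb : (0:ℝ) ≤ C * ((2 * (m:ℝ) + 1) * s) ^ (1 / κ) := by positivity
          calc ∑ i : Fin n, μ (cube (ctr i) ((2 * m + 1) * s))
              ≤ ∑ _i : Fin n, ENNReal.ofReal (C * ((2 * (m:ℝ) + 1) * s) ^ (1 / κ)) :=
                Finset.sum_le_sum fun i _ => hHolder _ _ hside
            _ = (n : ENNReal) * ENNReal.ofReal (C * ((2 * (m:ℝ) + 1) * s) ^ (1 / κ)) := by
                simp [Finset.sum_const, nsmul_eq_mul]
            _ = ENNReal.ofReal ((n : ℝ) * (C * ((2 * (m:ℝ) + 1) * s) ^ (1 / κ))) := by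
                rw [← ENNReal.ofReal_natCast n, ← ENNReal.ofReal_mul (by positivity)]
            _ ≤ ENNReal.ofReal (δ / 2) := by
                apply ENNReal.ofReal_le_ofReal
                calc (n : ℝ) * (C * ((2 * (m:ℝ) + 1) * s) ^ (1 / κ))
                    ≤ (D : ℝ) * (C * ((2 * (m:ℝ) + 1) * s) ^ (1 / κ)) := by
                      have : (n:ℝ) ≤ (D:ℝ) := by exact_mod_cast Nat.le_of_succ_le hn
                      nlinarith
                  _ ≤ δ / 2 := hDb
        have h3 : ENNReal.ofReal δ ≤ μ G + ENNReal.ofReal (δ / 2) := by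
          rw [← hμD₁]
          exact le_trans h1 (add_le_add le_rfl h2)
        rw [show (δ / 2) = δ - δ / 2 by ring, ENNReal.ofReal_sub _ (by positivity)]
        exact tsub_le_iff_right.mpr h3
      -- pigeonhole over the grid
      have hcover : G ⊆ ⋃ g : Fin (2 * k) → Fin M, (cube (p g) s ∩ G) := by
        intro y hy
        obtain ⟨g, hg⟩ := cov y hy.1
        exact Set.mem_iUnion.mpr ⟨g, hg, hy⟩
      have hsum : δ / 2 ≤ ∑ g : Fin (2 * k) → Fin M, (μ (cube (p g) s ∩ G)).toReal := by
        have h4 : μ G ≤ ∑ g : Fin (2 * k) → Fin M, μ (cube (p g) s ∩ G) :=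
          le_trans (measure_mono hcover) (measure_iUnion_fintype_le μ _)
        have h5 : ∑ g : Fin (2 * k) → Fin M, μ (cube (p g) s ∩ G)
            = ENNReal.ofReal (∑ g : Fin (2 * k) → Fin M, (μ (cube (p g) s ∩ G)).toReal) := by
          rw [ENNReal.ofReal_sum_of_nonneg (fun g _ => ENNReal.toReal_nonneg)]
          exact Finset.sum_congr rfl fun g _ => (ENNReal.ofReal_toReal (measure_ne_top μ _)).symm
        have h6 := le_trans hGmeas (h5 ▸ h4)
        exact (ENNReal.ofReal_le_ofReal_iff
          (Finset.sum_nonneg fun g _ => ENNReal.toReal_nonneg)).mp h6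
      have hpig : ∃ g : Fin (2 * k) → Fin M,
          c * (D : ℝ) ^ (-(4 * k * κ)) ≤ (μ (cube (p g) s ∩ G)).toReal := by
        by_contra hcon
        push_neg at hcon
        have h7 : ∑ g : Fin (2 * k) → Fin M, (μ (cube (p g) s ∩ G)).toReal
            < ∑ _g : Fin (2 * k) → Fin M, c * (D : ℝ) ^ (-(4 * k * κ)) :=
          Finset.sum_lt_sum_of_nonempty Finset.univ_nonempty (fun g _ => hcon g)
        rw [Finset.sum_const, nsmul_eq_mul, Finset.card_univ] at h7
        rw [hcard] at h7
        nlinarith [htarget, hsum]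
      obtain ⟨g, hg⟩ := hpig
      have hgEN : ENNReal.ofReal (c * (D : ℝ) ^ (-(4 * k * κ))) ≤ μ (cube (p g) s ∩ G) :=
        le_trans (ENNReal.ofReal_le_ofReal hg)
          (ENNReal.ofReal_toReal (measure_ne_top μ _)).le
      have hpos : 0 < c * (D : ℝ) ^ (-(4 * k * κ)) := by
        have := Real.rpow_pos_of_pos hD0 (-(4 * (k:ℝ) * κ))
        positivity
      have hne : (cube (p g) s ∩ G).Nonempty := by
        by_contra h
        rw [Set.not_nonempty_iff_eq_empty] at h
        rw [h, measure_empty] at hgEN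
        exact (ENNReal.ofReal_pos.mpr hpos).ne' (le_antisymm hgEN (by positivity))
      obtain ⟨y, hy1, hy2⟩ := hne
      refine ⟨Fin.snoc ctr (p g), ?_, ?_⟩
      · intro i
        refine Fin.lastCases ?_ (fun j => ?_) i
        · rw [Fin.snoc_last]
          exact hgEN.trans (measure_mono Set.inter_subset_left)
        · rw [Fin.snoc_castSucc]
          exact hmeas j
      · have hnew : ∀ j : Fin n,
            Disjoint (cube (p g) ((m : ℝ) * s)) (cube (ctr j) ((m : ℝ) * s)) := by
          intro j
          apply dilate_disj _ _ _ _ y hy1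
          intro hmem
          exact hy2.2 (Set.mem_iUnion.mpr ⟨j, hmem⟩)
        intro i j hij
        rcases Fin.eq_castSucc_or_eq_last i with ⟨i', rfl⟩ | rfl <;>
          rcases Fin.eq_castSucc_or_eq_last j with ⟨j', rfl⟩ | rfl
        · have hij' : i' ≠ j' := fun h => hij (by rw [h])
          simpa [Function.onFun, Fin.snoc_castSucc] using hdisj hij'
        · simpa [Function.onFun, Fin.snoc_castSucc, Fin.snoc_last] using (hnew i').symm
        · simpa [Function.onFun, Fin.snoc_castSucc, Fin.snoc_last] using hnew j'
        · exact absurd rfl hij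
  obtain ⟨ctr, h1, h2⟩ := key D le_rfl
  exact ⟨ctr, h1, h2⟩
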